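/- For every natural number n ≥ 1, γ = (-1)^(n+1) · ((n! + (-1)^(n+1))/2) · lim_{x→0} [1/x + (1/x - Γ(-n+x))/(-1 - x·Γ(-n-x))] + H_n. -/

import Mathlib

open Real Filter Topology

noncomputable def Pa12 (n : ℕ) (x : ℝ) : ℝ := ∏ k ∈ Finset.range n, (x - (k + 1))

lemma Pa12_zero (x : ℝ) : Pa12 0 x = 1 := by simp [Pa12]

lemma Pa12_succ (n : ℕ) (x : ℝ) : Pa12 (n + 1) x = Pa12 n x * (x - (n + 1)) := by
  simp [Pa12, Finset.prod_range_succ]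

lemma Pa12_ne_zero {n : ℕ} {x : ℝ} (hx : |x| < 1) : Pa12 n x ≠ 0 := by
  refine Finset.prod_ne_zero_iff.mpr fun k _ => sub_ne_zero.mpr ?_
  have h1 : x < 1 := (abs_lt.mp hx).2
  have h2 : (0 : ℝ) ≤ (k : ℝ) := k.cast_nonneg
  exact ne_of_lt (by linarith)

lemma Gamma_eq12 (n : ℕ) {x : ℝ} (hx : x ≠ 0) (hx1 : |x| < 1) :
    Real.Gamma (x - n) = Real.Gamma (x + 1) / (x * Pa12 n x) := by
  induction n with
  | zero =>
    rw [Real.Gamma_add_one hx]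
    simp [Pa12_zero]
    rw [mul_comm, mul_div_assoc, div_self hx, mul_one]
  | succ m ih =>
    have hlt : x < 1 := (abs_lt.mp hx1).2
    have h2 : (0 : ℝ) ≤ (m : ℝ) := m.cast_nonneg
    have hne : x - ((m : ℝ) + 1) ≠ 0 := sub_ne_zero.mpr (ne_of_lt (by linarith))
    have h3 := Real.Gamma_add_one hne
    have h4 : x - ((m : ℝ) + 1) + 1 = x - m := by ring
    rw [h4] at h3
    have : Real.Gamma (x - ((m : ℝ) + 1)) = Real.Gamma (x - m) / (x - ((m : ℝ) + 1)) := by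
      field_simp [h3]
      exact h3.symm
    push_cast
    rw [this, ih, div_div, Pa12_succ, mul_assoc]

lemma Pa12_hasDeriv (n : ℕ) :
    HasDerivAt (Pa12 n) ((-1) ^ (n + 1) * n.factorial * (harmonic n : ℝ)) 0 ∧
      Pa12 n 0 = (-1) ^ n * n.factorial := by
  induction n with
  | zero =>
    constructor
    · have h : Pa12 0 = fun _ : ℝ => (1 : ℝ) := funext Pa12_zero
      rw [h]
      simpa using hasDerivAt_const (0 : ℝ) (1 : ℝ)
    · simp [Pa12_zero]
  | succ m ih =>
    obtain ⟨hd, hc⟩ := ih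
    have h : Pa12 (m + 1) = fun x : ℝ => Pa12 m x * (x - ((m : ℝ) + 1)) := by
      funext x; rw [Pa12_succ]
    have hmul := hd.mul (((hasDerivAt_id (0 : ℝ)).sub_const ((m : ℝ) + 1)))
    rw [h]
    constructor
    · refine hmul.congr_deriv ?_
      rw [hc, harmonic_succ, Nat.factorial_succ]
      have hm1 : ((m : ℝ) + 1) ≠ 0 := by positivity
      push_cast
      field_simp
      simp only [id]
      ring
    · simp only [hc, Nat.factorial_succ]
      push_cast
      ring

lemma G12_hasDeriv :
    HasDerivAt (fun x : ℝ => Real.Gamma (x + 1)) (-Real.eulerMascheroniConstant) 0 := by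
  have h := HasDerivAt.comp_of_eq (x := (0:ℝ))
    Real.hasDerivAt_Gamma_one ((hasDerivAt_id (0 : ℝ)).add_const 1) (by norm_num)
  simpa [Function.comp_def] using h

lemma limit12 (n : ℕ) (hn : 1 ≤ n) :
    Tendsto (fun x : ℝ => 1 / x +
        (1 / x - Real.Gamma (-(n : ℝ) + x)) / (-1 - x * Real.Gamma (-(n : ℝ) - x)))
      (nhdsWithin 0 {0}ᶜ)
      (𝓝 ((2 * ((-1) ^ (n + 1) * n.factorial * (harmonic n : ℝ) +
            ((-1) ^ n * n.factorial) * Real.eulerMascheroniConstant)) /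
          (((-1) ^ n * n.factorial) * (1 - (-1) ^ n * n.factorial)))) := by
  set γ := Real.eulerMascheroniConstant with hγ
  set c : ℝ := (-1) ^ n * n.factorial with hcdef
  set d : ℝ := (-1) ^ (n + 1) * n.factorial * (harmonic n : ℝ) with hddef
  obtain ⟨hd, hc⟩ := Pa12_hasDeriv n
  set G : ℝ → ℝ := fun x => Real.Gamma (x + 1) with hGdef
  have hG : HasDerivAt G (-γ) 0 := G12_hasDeriv
  have hG0 : G 0 = 1 := by simp [hGdef, Real.Gamma_one]
  have hGneg : HasDerivAt (fun x => G (-x)) γ 0 := by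
    have := HasDerivAt.comp_of_eq (x := (0:ℝ)) hG (hasDerivAt_neg (0 : ℝ)) (by norm_num)
    simpa [Function.comp_def] using this
  have hPneg : HasDerivAt (fun x => Pa12 n (-x)) (-d) 0 := by
    have := HasDerivAt.comp_of_eq (x := (0:ℝ)) hd (hasDerivAt_neg (0 : ℝ)) (by norm_num)
    simpa [Function.comp_def, hddef] using this
  -- the numerator function and its derivative
  have hh : HasDerivAt (fun x => Pa12 n x * G (-x) - Pa12 n (-x) * G x)
      (2 * (d + c * γ)) 0 := by
    have h2 := (hd.mul hGneg).sub (hPneg.mul hG)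
    refine h2.congr_deriv ?_
    simp only [neg_zero, hG0, hc]
    ring
  have hslope : Tendsto (fun x : ℝ => (Pa12 n x * G (-x) - Pa12 n (-x) * G x) / x)
      (nhdsWithin 0 {0}ᶜ) (𝓝 (2 * (d + c * γ))) := by
    have h3 := hasDerivAt_iff_tendsto_slope.mp hh
    refine h3.congr fun x => ?_
    simp only [slope_def_field, neg_zero, hG0, sub_zero, mul_one]
    ring_nf
  -- nonvanishing facts
  have hfac : (n.factorial : ℝ) ≠ 0 := by positivity
  have hcne : c ≠ 0 := by
    simp only [hcdef]
    exact mul_ne_zero (pow_ne_zero _ (by norm_num)) hfac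
  have h1c : (1 : ℝ) - c ≠ 0 := by
    rcases Nat.even_or_odd n with he | ho
    · have h2 : 2 ≤ n := by rcases he with ⟨k, hk⟩; omega
      have h3 : 2 ≤ n.factorial := le_trans h2 (Nat.self_le_factorial n)
      have h4 : (2 : ℝ) ≤ (n.factorial : ℝ) := by exact_mod_cast h3
      simp only [hcdef, he.neg_one_pow, one_mul]
      linarith
    · have : (0 : ℝ) < (n.factorial : ℝ) := by positivity
      simp only [hcdef, ho.neg_one_pow, neg_one_mul]
      linarith
  -- denominator tendsto
  have hdenom : Tendsto (fun x : ℝ => Pa12 n x * (G (-x) - Pa12 n (-x)))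
      (nhdsWithin 0 {0}ᶜ) (𝓝 (c * (1 - c))) := by
    have hcont : ContinuousAt (fun x : ℝ => Pa12 n x * (G (-x) - Pa12 n (-x))) 0 :=
      (hd.continuousAt.mul (hGneg.continuousAt.sub hPneg.continuousAt))
    have h0 : Pa12 n 0 * (G (-0) - Pa12 n (-0)) = c * (1 - c) := by
      simp [neg_zero, hG0, hc, hcdef]
    have := hcont.tendsto
    rw [h0] at this
    exact this.mono_left nhdsWithin_le_nhds
  have hne2 : c * (1 - c) ≠ 0 := mul_ne_zero hcne h1c
  have hdiv := hslope.div hdenom hne2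
  refine hdiv.congr' ?_
  -- eventual equality
  have h1 : ∀ᶠ x : ℝ in 𝓝 0, |x| < 1 := by
    have : ContinuousAt (fun x : ℝ => |x|) 0 := continuous_abs.continuousAt
    have := this.eventually_lt continuousAt_const (by norm_num : |(0:ℝ)| < 1)
    exact this
  have h2 : ∀ᶠ x : ℝ in 𝓝 0, G (-x) - Pa12 n (-x) ≠ 0 := by
    have hcont : ContinuousAt (fun x : ℝ => G (-x) - Pa12 n (-x)) 0 :=
      hGneg.continuousAt.sub hPneg.continuousAt
    have h0 : (fun x : ℝ => G (-x) - Pa12 n (-x)) 0 ≠ 0 := by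
      simp only [neg_zero, hG0, hc]
      exact h1c
    exact hcont.eventually_ne h0
  filter_upwards [(h1.and h2).filter_mono nhdsWithin_le_nhds, self_mem_nhdsWithin]
    with x hx hx0
  obtain ⟨hx1, hx2⟩ := hx
  have hx0' : x ≠ 0 := hx0
  have hPx : Pa12 n x ≠ 0 := Pa12_ne_zero hx1
  have hPnx : Pa12 n (-x) ≠ 0 := Pa12_ne_zero (by rwa [abs_neg])
  have e1 : Real.Gamma (-(n : ℝ) + x) = G x / (x * Pa12 n x) := by
    rw [show -(n : ℝ) + x = x - n by ring]
    exact Gamma_eq12 n hx0' hx1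
  have e2 : Real.Gamma (-(n : ℝ) - x) = G (-x) / (-x * Pa12 n (-x)) := by
    rw [show -(n : ℝ) - x = -x - n by ring]
    exact Gamma_eq12 n (neg_ne_zero.mpr hx0') (by rwa [abs_neg])
  rw [e2, e1]
  have hd0 : -1 - x * (G (-x) / (-x * Pa12 n (-x))) = (G (-x) - Pa12 n (-x)) / Pa12 n (-x) := by
    field_simp
    ring
  rw [hd0]
  simp only [Pi.div_apply]
  field_simp
  ring

lemma h1c12 (n : ℕ) (hn : 1 ≤ n) : (1 : ℝ) - (-1) ^ n * n.factorial ≠ 0 := by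
  rcases Nat.even_or_odd n with he | ho
  · have h2 : 2 ≤ n := by rcases he with ⟨k, hk⟩; omega
    have h3 : 2 ≤ n.factorial := le_trans h2 (Nat.self_le_factorial n)
    have h4 : (2 : ℝ) ≤ (n.factorial : ℝ) := by exact_mod_cast h3
    simp only [he.neg_one_pow, one_mul]
    linarith
  · have : (0 : ℝ) < (n.factorial : ℝ) := by positivity
    simp only [ho.neg_one_pow, neg_one_mul]
    linarith

theorem stmt_12 (n : ℕ) (hn : 1 ≤ n) :
    Real.eulerMascheroniConstant =
      (-1) ^ (n + 1) * (((n.factorial : ℝ) + (-1) ^ (n + 1)) / 2) *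
        limUnder (nhdsWithin 0 {0}ᶜ)
          (fun x : ℝ => 1 / x +
            (1 / x - Real.Gamma (-(n : ℝ) + x)) / (-1 - x * Real.Gamma (-(n : ℝ) - x))) +
      (harmonic n : ℝ) := by
  rw [Filter.Tendsto.limUnder_eq (limit12 n hn)]
  have hfac : (n.factorial : ℝ) ≠ 0 := by positivity
  have h1c := h1c12 n hn
  rcases Nat.even_or_odd n with he | ho
  · simp only [pow_succ, he.neg_one_pow, one_mul] at h1c ⊢
    field_simp
    ring
  · simp only [pow_succ, ho.neg_one_pow, neg_one_mul, neg_neg, one_mul] at h1c ⊢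
    field_simp
    ring
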